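/- arXiv:2209.04667 — 2 statements merged into one kernel-verified Lean document; each statement's English description precedes it below -/
import Mathlib

section
/- (Kieninger criterion) Let X be a Polish space, (X; f_i : i ∈ I) an IFS with Hutchinson operator F, and A* ⊆ X a compact set which is a semiattractor, i.e., ⋂_{x∈X} Li Fⁿ({x}) = A*. For a sequence (iₙ) ∈ I^∞ define the fibre π(i₁i₂…) = ⋂_{n≥1} f_{i₁}∘…∘f_{iₙ}(A*). Suppose some fibre is a singleton: there exist (iₙ) ∈ I^∞ and a* ∈ A* with π(i₁i₂…) = {a*}. Then A* is strongly-fibred: for every a ∈ A* and every open set V containing a, there exists (jₙ) ∈ I^∞ such that π(j₁j₂…) ⊆ V. -/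
open Filter Topology Set

/-- Lower Kuratowski limit of a sequence of sets. -/
def Li {X : Type*} [MetricSpace X] (S : ℕ → Set X) : Set X :=
  {y | ∃ u : ℕ → X, (∀ n, u n ∈ S n) ∧ Tendsto u atTop (𝓝 y)}

/-- Hutchinson operator of the IFS `(X; f_i : i ∈ I)`. -/
def hutch {X : Type*} [TopologicalSpace X] {I : Type*} (f : I → X → X) (S : Set X) : Set X :=
  closure (⋃ i, f i '' S)

/-- Composition `f_{i₁} ∘ … ∘ f_{i_k}` along a list of indices. -/
def seqComp {X I : Type*} (f : I → X → X) : List I → (X → X)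
  | [] => id
  | i :: t => f i ∘ seqComp f t

/-- The fibre of the set `A` with address `i = (i₁ i₂ …)`:
`π(i₁i₂…) = ⋂_{n ≥ 1} f_{i₁}∘…∘f_{iₙ}(A)`. -/
def fibre {X I : Type*} (f : I → X → X) (A : Set X) (i : ℕ → I) : Set X :=
  ⋂ n : ℕ, seqComp f (List.ofFn fun m : Fin (n + 1) => i m) '' A

lemma seqComp_append {X I : Type*} (f : I → X → X) (l₁ l₂ : List I) :
    seqComp f (l₁ ++ l₂) = seqComp f l₁ ∘ seqComp f l₂ := by
  induction l₁ with
  | nil => rfl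
  | cons h t ih =>
    ext x
    simp [seqComp, ih]

lemma seqComp_continuous {X I : Type*} [TopologicalSpace X] (f : I → X → X)
    (hf : ∀ i, Continuous (f i)) (l : List I) : Continuous (seqComp f l) := by
  induction l with
  | nil => exact continuous_id
  | cons h t ih => exact (hf h).comp ih

lemma iter_hutch_subset {X : Type*} [TopologicalSpace X] {I : Type*}
    (f : I → X → X) (hf : ∀ i, Continuous (f i)) (x : X) :
    ∀ n, (hutch f)^[n] {x} ⊆
      closure ((fun w => seqComp f w x) '' {w : List I | w.length = n}) := by
  intro n
  induction n with
  | zero =>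
    intro y hy
    apply subset_closure
    exact ⟨[], rfl, hy.symm⟩
  | succ n ih =>
    rw [Function.iterate_succ_apply']
    have h1 : (⋃ i, f i '' ((hutch f)^[n] {x})) ⊆
        ⋃ i, closure (f i '' ((fun w => seqComp f w x) '' {w : List I | w.length = n})) := by
      refine Set.iUnion_mono fun i => ?_
      exact (Set.image_mono ih).trans (image_closure_subset_closure_image (hf i))
    have h2 : (⋃ i, closure (f i '' ((fun w => seqComp f w x) '' {w : List I | w.length = n})))
        ⊆ closure (⋃ i, f i '' ((fun w => seqComp f w x) '' {w : List I | w.length = n})) :=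
      Set.iUnion_subset fun i => closure_mono (Set.subset_iUnion (fun i => f i '' ((fun w => seqComp f w x) '' {w : List I | w.length = n})) i)
    have h3 : (⋃ i, f i '' ((fun w => seqComp f w x) '' {w : List I | w.length = n}))
        = (fun w => seqComp f w x) '' {w : List I | w.length = n + 1} := by
      ext y
      simp only [Set.mem_iUnion, Set.mem_image, Set.mem_setOf_eq]
      constructor
      · rintro ⟨i, z, ⟨w, hw, rfl⟩, rfl⟩
        exact ⟨i :: w, by simp [hw], rfl⟩
      · rintro ⟨w, hw, rfl⟩
        match w, hw with
        | i :: t, hw => exact ⟨i, seqComp f t x, ⟨t, by simpa using hw, rfl⟩, rfl⟩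
    calc hutch f ((hutch f)^[n] {x})
        = closure (⋃ i, f i '' ((hutch f)^[n] {x})) := rfl
      _ ⊆ closure (closure ((fun w => seqComp f w x) '' {w : List I | w.length = n + 1})) := by
          refine closure_mono (h1.trans (h2.trans ?_))
          rw [h3]
      _ = _ := closure_closure

/-- Invariance of the semiattractor: each `f j` maps `A` into `A`. -/
lemma semi_invariant {X : Type*} [MetricSpace X] {I : Type*}
    (f : I → X → X) (hf : ∀ i, Continuous (f i)) (A : Set X)
    (hsemi : ⋂ x : X, Li (fun n => (hutch f)^[n] {x}) = A) :
    ∀ j, ∀ a ∈ A, f j a ∈ A := by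
  intro j a ha
  rw [← hsemi] at ha ⊢
  rw [Set.mem_iInter] at ha ⊢
  intro x
  obtain ⟨u, hu, hconv⟩ := ha x
  refine ⟨fun n => Nat.rec x (fun n _ => f j (u n)) n, fun n => ?_, ?_⟩
  · cases n with
    | zero => exact rfl
    | succ n =>
      show f j (u n) ∈ (hutch f)^[n + 1] {x}
      rw [Function.iterate_succ_apply']
      exact subset_closure (Set.mem_iUnion.2 ⟨j, Set.mem_image_of_mem _ (hu n)⟩)
  · have h1 : Tendsto (fun n => f j (u n)) atTop (𝓝 (f j a)) :=
      ((hf j).tendsto a).comp hconv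
    exact (tendsto_add_atTop_iff_nat 1).mp h1

/-- The Kieninger criterion: a compact semiattractor admitting a singleton fibre is
strongly-fibred. -/
theorem stronglyFibred_of_singleton_fibre
    {X : Type*} [MetricSpace X] [CompleteSpace X] [TopologicalSpace.SeparableSpace X]
    {I : Type*} [Fintype I] [Nonempty I]
    (f : I → X → X) (hf : ∀ i, Continuous (f i))
    (A : Set X) (hA : IsCompact A) (hne : A.Nonempty)
    (hsemi : ⋂ x : X, Li (fun n => (hutch f)^[n] {x}) = A)
    (hfib : ∃ (i : ℕ → I) (a : X), a ∈ A ∧ fibre f A i = {a}) :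
    ∀ a ∈ A, ∀ V : Set X, IsOpen V → a ∈ V →
      ∃ j : ℕ → I, fibre f A j ⊆ V := by
  intro a ha V hV haV
  obtain ⟨i, astar, hastar, hfibeq⟩ := hfib
  -- a is in the lower limit of F^n {a*}
  have haLi : a ∈ Li (fun n => (hutch f)^[n] {astar}) := by
    rw [← hsemi] at ha
    exact Set.mem_iInter.mp ha astar
  obtain ⟨u, hu, hconv⟩ := haLi
  obtain ⟨n, hn⟩ := (hconv.eventually_mem (hV.mem_nhds haV)).exists
  have hcl := iter_hutch_subset f hf astar n (hu n)
  rw [mem_closure_iff] at hcl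
  obtain ⟨y, hyV, w, hw, rfl⟩ := hcl V hV hn
  -- The nested sequence K m
  set K : ℕ → Set X := fun m => seqComp f (List.ofFn fun k : Fin (m + 1) => i k) '' A with hK
  have hKc : ∀ m, IsCompact (K m) := fun m => hA.image (seqComp_continuous f hf _)
  have hinv := semi_invariant f hf A hsemi
  have hmono : ∀ m, K (m + 1) ⊆ K m := by
    intro m
    have hofn : (List.ofFn fun k : Fin (m + 2) => i k)
        = (List.ofFn fun k : Fin (m + 1) => i k) ++ [i (m + 1)] := by
      rw [List.ofFn_succ' (fun k : Fin (m + 2) => i k)]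
      simp [List.concat_eq_append]
    rw [hK]
    simp only
    rw [hofn, seqComp_append, Set.image_comp]
    refine Set.image_mono ?_
    rintro z ⟨b, hb, rfl⟩
    exact hinv _ b hb
  have hanti : Antitone K := antitone_nat_of_succ_le hmono
  have hdir : Directed (· ⊇ ·) K := fun p q =>
    ⟨max p q, hanti (le_max_left p q), hanti (le_max_right p q)⟩
  have hinter : ⋂ m, K m = {astar} := hfibeq
  -- the open set U = (seqComp f w)⁻¹ V contains a*
  have hUopen : IsOpen ((seqComp f w) ⁻¹' V) := hV.preimage (seqComp_continuous f hf w)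
  have hU : ∀ z ∈ ⋂ m, K m, (seqComp f w) ⁻¹' V ∈ 𝓝 z := by
    intro z hz
    rw [hinter, Set.mem_singleton_iff] at hz
    subst hz
    exact hUopen.mem_nhds hyV
  obtain ⟨m, hm⟩ := exists_subset_nhds_of_isCompact' hdir hKc (fun m => (hKc m).isClosed) hU
  -- the address j = w followed by i
  refine ⟨fun k => if h : k < w.length then w.get ⟨k, h⟩ else i (k - w.length), ?_⟩
  set j : ℕ → I := fun k => if h : k < w.length then w.get ⟨k, h⟩ else i (k - w.length) with hj
  have hlist : (List.ofFn fun k : Fin (w.length + m + 1) => j k)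
      = w ++ List.ofFn (fun k : Fin (m + 1) => i k) := by
    apply List.ext_getElem
    · simp [Nat.add_assoc]
    · intro k h1 h2
      simp only [List.getElem_ofFn]
      by_cases hk : k < w.length
      · rw [List.getElem_append_left hk]
        simp [hj, hk]
      · rw [List.getElem_append_right (le_of_not_gt hk)]
        simp only [List.getElem_ofFn]
        simp [hj, hk]
  have h1 : fibre f A (fun k => j k) ⊆ seqComp f w '' K m := by
    have h2 := Set.iInter_subset
      (fun n => seqComp f (List.ofFn fun mm : Fin (n + 1) => j mm) '' A) (w.length + m)
    rw [show (List.ofFn fun mm : Fin (w.length + m + 1) => j mm)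
        = w ++ List.ofFn (fun k : Fin (m + 1) => i k) from hlist,
      seqComp_append, Set.image_comp] at h2
    exact h2
  intro z hz
  obtain ⟨y, hy, rfl⟩ := h1 hz
  exact hm hy
end

section
/- Let Δ ⊆ ℝ² be the convex hull of (0,0), (1,0), (0,1) and f₁(x,y) = (x + y/2, y/2). Then the fibre with constant address 1 is a segment: ⋂_{n≥1} f₁ⁿ(Δ) = [0,1] × {0}. In particular this fibre is not a singleton. -/
open Set

/-- The Barnsley–Vince map `f₁(x,y) = (x + y/2, y/2)`. -/
noncomputable def f1 : ℝ × ℝ → ℝ × ℝ := fun v => (v.1 + v.2 / 2, v.2 / 2)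

/-- The filled triangle with vertices `(0,0)`, `(1,0)`, `(0,1)`. -/
def Δ : Set (ℝ × ℝ) := convexHull ℝ {(0, 0), (1, 0), (0, 1)}

lemma tri_eq : Δ = {p : ℝ × ℝ | 0 ≤ p.1 ∧ 0 ≤ p.2 ∧ p.1 + p.2 ≤ 1} := by
  apply Subset.antisymm
  · apply convexHull_min
    · intro p hp
      simp only [mem_insert_iff, mem_singleton_iff] at hp
      rcases hp with h | h | h <;> subst h <;> norm_num
    · intro p hp q hq a b ha hb hab
      simp only [mem_setOf_eq, Prod.fst_add, Prod.snd_add, Prod.smul_fst, Prod.smul_snd,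
        smul_eq_mul] at *
      refine ⟨by nlinarith [hp.1, hq.1], by nlinarith [hp.2.1, hq.2.1], by nlinarith⟩
  · intro p hp
    obtain ⟨h1, h2, h3⟩ := hp
    have h00 : ((0 : ℝ), (0 : ℝ)) ∈ Δ := subset_convexHull ℝ _ (by simp)
    have h10 : ((1 : ℝ), (0 : ℝ)) ∈ Δ := subset_convexHull ℝ _ (by simp)
    have h01 : ((0 : ℝ), (1 : ℝ)) ∈ Δ := subset_convexHull ℝ _ (by simp)
    have hC := convex_convexHull ℝ ({(0, 0), (1, 0), (0, 1)} : Set (ℝ × ℝ))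
    set s := p.1 + p.2 with hs
    rcases eq_or_lt_of_le (by linarith : (0 : ℝ) ≤ s) with h | h
    · have hp1 : p.1 = 0 := by linarith
      have hp2 : p.2 = 0 := by linarith
      have : p = ((0 : ℝ), (0 : ℝ)) := Prod.ext hp1 hp2
      rw [this]; exact h00
    · have hq : ((p.1 / s, p.2 / s) : ℝ × ℝ) ∈ Δ := by
        have := hC h10 h01 (by positivity : (0:ℝ) ≤ p.1 / s) (by positivity : (0:ℝ) ≤ p.2 / s)
          (by field_simp; exact hs.symm)
        convert this using 1
        · rfl
        · ext <;> simp
      have := hC h00 hq (by linarith : (0:ℝ) ≤ 1 - s) (le_of_lt h) (by ring)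
      convert this using 1
      · rfl
      · ext <;> simp <;> field_simp
  
lemma f1_iter (n : ℕ) (v : ℝ × ℝ) :
    f1^[n] v = (v.1 + v.2 * (1 - (1/2 : ℝ)^n), v.2 * (1/2 : ℝ)^n) := by
  induction n generalizing v with
  | zero => simp
  | succ n ih =>
    rw [Function.iterate_succ_apply, ih]
    simp only [f1]
    ext <;> simp <;> ring

/-- The fibre with constant address `1` is the segment `[0,1] × {0}`; in particular it is
not a singleton. -/
theorem fibre_constant_one :
    (⋂ n ∈ Set.Ici 1, f1^[n] '' Δ) = Set.Icc (0 : ℝ) 1 ×ˢ ({0} : Set ℝ) ∧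
    ¬ ∃ a : ℝ × ℝ, (⋂ n ∈ Set.Ici 1, f1^[n] '' Δ) = {a} := by
  have key : (⋂ n ∈ Set.Ici 1, f1^[n] '' Δ) = Set.Icc (0 : ℝ) 1 ×ˢ ({0} : Set ℝ) := by
    ext p
    simp only [mem_iInter, mem_Ici, mem_image, mem_prod, mem_Icc, mem_singleton_iff]
    constructor
    · intro h
      have hp2nonneg : 0 ≤ p.2 := by
        obtain ⟨v, hv, hveq⟩ := h 1 le_rfl
        rw [tri_eq] at hv
        rw [f1_iter] at hveq
        have : p.2 = v.2 * (1/2 : ℝ)^1 := by rw [← hveq]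
        nlinarith [hv.2.1]
      have hp2 : p.2 = 0 := by
        by_contra hne
        have hpos : 0 < p.2 := lt_of_le_of_ne hp2nonneg (Ne.symm hne)
        obtain ⟨n, hn⟩ := exists_pow_lt_of_lt_one hpos (by norm_num : (1/2 : ℝ) < 1)
        obtain ⟨v, hv, hveq⟩ := h (n + 1) (Nat.le_add_left 1 n)
        rw [tri_eq] at hv
        rw [f1_iter] at hveq
        have heq : p.2 = v.2 * (1/2 : ℝ)^(n+1) := by rw [← hveq]
        have hv2le : v.2 ≤ 1 := by linarith [hv.1, hv.2.2]
        have hppos : (0:ℝ) < (1/2 : ℝ)^(n+1) := by positivity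
        have : p.2 ≤ (1/2 : ℝ)^(n+1) := by nlinarith
        have hle : ((1:ℝ)/2)^(n+1) ≤ (1/2 : ℝ)^n := by
          apply pow_le_pow_of_le_one (by norm_num) (by norm_num)
          omega
        linarith
      obtain ⟨v, hv, hveq⟩ := h 1 le_rfl
      rw [tri_eq] at hv
      rw [f1_iter] at hveq
      have hp2' : p.2 = v.2 * (1/2 : ℝ)^1 := by rw [← hveq]
      have hv2 : v.2 = 0 := by
        rw [hp2] at hp2'; nlinarith
      have hp1 : p.1 = v.1 + v.2 * (1 - (1/2 : ℝ)^1) := by rw [← hveq]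
      refine ⟨⟨?_, ?_⟩, hp2⟩ <;> rw [hp1, hv2] <;> [linarith [hv.1]; linarith [hv.2.2, hv.1]]
    · rintro ⟨⟨h0, h1⟩, h2⟩ n _
      refine ⟨(p.1, 0), ?_, ?_⟩
      · rw [tri_eq]; exact ⟨h0, le_refl 0, by simpa using h1⟩
      · rw [f1_iter]
        ext <;> simp [h2]
  refine ⟨key, ?_⟩
  rintro ⟨a, ha⟩
  rw [key] at ha
  have h1 : ((0:ℝ), (0:ℝ)) ∈ Set.Icc (0 : ℝ) 1 ×ˢ ({0} : Set ℝ) := by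
    simp [mem_prod]
  have h2 : ((1:ℝ), (0:ℝ)) ∈ Set.Icc (0 : ℝ) 1 ×ˢ ({0} : Set ℝ) := by
    simp [mem_prod]
  rw [ha] at h1 h2
  simp only [mem_singleton_iff] at h1 h2
  rw [← h1] at h2
  exact one_ne_zero (congrArg Prod.fst h2)
end
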